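/- Let F be a field of characteristic 2, let α ∈ F, and let A₁,…,A_m ∈ M₂(F). If the matrix α·I + Σ_{i=1}^m Aᵢᵀ·Aᵢ lies in Alt(M₂(F), t), i.e., equals Bᵀ + B for some B ∈ M₂(F), then α = β² for some β ∈ F. -/

import Mathlib

open scoped TensorProduct Matrix

/-- If `α·I + Σ Aᵢᵀ·Aᵢ ∈ Alt(M₂(F), t)` over a field of characteristic two,
then `α` is a square in `F`. -/
theorem statement_8 {F : Type*} [Field F] [CharP F 2] (α : F) {m : ℕ}
    (A : Fin m → Matrix (Fin 2) (Fin 2) F)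
    (h : ∃ B : Matrix (Fin 2) (Fin 2) F,
      α • (1 : Matrix (Fin 2) (Fin 2) F) + ∑ i, (A i)ᵀ * A i = Bᵀ + B) :
    ∃ β : F, β ^ 2 = α := by
  obtain ⟨B, hB⟩ := h
  have h00 := congrFun (congrFun hB 0) 0
  simp only [Matrix.add_apply, Matrix.smul_apply, Matrix.one_apply_eq, smul_eq_mul, mul_one,
    Matrix.sum_apply, Matrix.mul_apply, Matrix.transpose_apply] at h00
  rw [CharTwo.add_self_eq_zero] at h00
  refine ⟨∑ i, ∑ k, A i k 0, ?_⟩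
  simp only [CharTwo.sum_sq]
  have : α = ∑ i, ∑ k, A i k 0 * A i k 0 := by
    have := congrArg (· + ∑ i, ∑ k, A i k 0 * A i k 0) h00
    simpa [add_assoc, CharTwo.add_self_eq_zero] using this
  rw [this]
  ring_nf
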